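/- Fix reals z1, z2 with z2 < 0 < z1, nonnegative reals g11, g22, g12, and c̄1, c̄2 > 0. Let H be the 2×2 symmetric real matrix with H11 = 1/c̄1 + g11, H22 = 1/c̄2 + g22, H12 = H21 = g12, and suppose det H < 0. Then there exists K > 0 such that for every real k with |k| ≥ K: det(k²·H + z·zᵀ) < 0, and consequently there exists a nonzero vector v ∈ ℝ² with vᵀ·(k²·H + z·zᵀ)·v < 0, i.e., the symmetric matrix k²·H + z·zᵀ has a strictly negative eigenvalue. -/

import Mathlib

/-- For a symmetric 2×2 matrix with negative determinant, the quadratic form takes a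
negative value on some nonzero vector. -/
lemma neg_form_of_det_neg (a b c : ℝ) (h : a * c - b * b < 0) :
    ∃ v : Fin 2 → ℝ, v ≠ 0 ∧
      dotProduct v ((!![a, b; b, c]).mulVec v) < 0 := by
  rcases lt_trichotomy a 0 with ha | ha | ha
  · refine ⟨![1, 0], ?_, ?_⟩
    · intro hv
      have := congrFun hv 0
      simp at this
    · simp [dotProduct, Matrix.mulVec, Fin.sum_univ_two]
      linarith
  · -- a = 0, so b ≠ 0
    have hb : b ≠ 0 := by
      intro hb; rw [ha, hb] at h; simp at h
    refine ⟨![-(c + 1), 2 * b], ?_, ?_⟩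
    · intro hv
      have := congrFun hv 1
      simp at this
      exact hb this
    · simp only [dotProduct, Matrix.mulVec, Fin.sum_univ_two]
      simp [Matrix.cons_val_zero, Matrix.cons_val_one, ha]
      nlinarith [sq_nonneg b, mul_self_pos.mpr hb]
  · refine ⟨![b, -a], ?_, ?_⟩
    · intro hv
      have := congrFun hv 1
      simp at this
      linarith
    · simp only [dotProduct, Matrix.mulVec, Fin.sum_univ_two]
      simp [Matrix.cons_val_zero, Matrix.cons_val_one]
      nlinarith

set_option maxHeartbeats 1000000 in
/-- Lemma 6 of the paper: if the Hessian `H` of the entropy-plus-steric energy density at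
the homogeneous state has negative determinant, then for all sufficiently large wavenumbers
`k` the matrix `k²·H + z·zᵀ` has negative determinant, and consequently (being symmetric)
it has a strictly negative eigenvalue, witnessed by a direction `v` with `vᵀ·(k²H+zzᵀ)·v < 0`;
hence the homogeneous state is linearly unstable under PNP-steric dynamics. -/
theorem stmt10 (z1 z2 g11 g22 g12 cbar1 cbar2 : ℝ)
    (hz2 : z2 < 0) (hz1 : 0 < z1)
    (hg11 : 0 ≤ g11) (hg22 : 0 ≤ g22) (hg12 : 0 ≤ g12)
    (hcbar1 : 0 < cbar1) (hcbar2 : 0 < cbar2)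
    (H : Matrix (Fin 2) (Fin 2) ℝ)
    (hH : H = !![1 / cbar1 + g11, g12; g12, 1 / cbar2 + g22])
    (hdet : H.det < 0) :
    ∃ K : ℝ, 0 < K ∧ ∀ k : ℝ, K ≤ |k| →
      (k ^ 2 • H + Matrix.vecMulVec ![z1, z2] ![z1, z2]).det < 0 ∧
      ∃ v : Fin 2 → ℝ, v ≠ 0 ∧
        dotProduct v
          ((k ^ 2 • H + Matrix.vecMulVec ![z1, z2] ![z1, z2]).mulVec v) < 0 := by
  have hh1 : 0 < 1 / cbar1 + g11 := by positivity
  have hh2 : 0 < 1 / cbar2 + g22 := by positivity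
  have hDdef : H.det = (1 / cbar1 + g11) * (1 / cbar2 + g22) - g12 * g12 := by
    rw [hH, Matrix.det_fin_two_of]
  have hDneg : (1 / cbar1 + g11) * (1 / cbar2 + g22) - g12 * g12 < 0 := hDdef ▸ hdet
  set D : ℝ := (1 / cbar1 + g11) * (1 / cbar2 + g22) - g12 * g12 with hD
  set B : ℝ := (1 / cbar1 + g11) * z2 ^ 2 + (1 / cbar2 + g22) * z1 ^ 2 - 2 * g12 * z1 * z2
    with hB
  clear_value D B
  have hB0 : 0 ≤ B := by
    rw [hB]
    have h3 : 0 ≤ g12 * z1 * (-z2) := mul_nonneg (mul_nonneg hg12 hz1.le) (by linarith)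
    nlinarith [mul_nonneg hh1.le (sq_nonneg z2), mul_nonneg hh2.le (sq_nonneg z1)]
  have hnD : 0 < -D := by linarith
  refine ⟨Real.sqrt ((B + 1) / (-D)) + 1, by positivity, fun k hk => ?_⟩
  have hs0 : 0 ≤ Real.sqrt ((B + 1) / (-D)) := Real.sqrt_nonneg _
  have hk1 : 1 ≤ |k| := by linarith
  have hksq : (B + 1) / (-D) ≤ k ^ 2 := by
    have hsle : Real.sqrt ((B + 1) / (-D)) ≤ |k| := by linarith
    have hsq := Real.sq_sqrt (div_nonneg (by linarith : (0:ℝ) ≤ B + 1) hnD.le)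
    calc (B + 1) / (-D) = Real.sqrt ((B + 1) / (-D)) ^ 2 := hsq.symm
      _ ≤ |k| ^ 2 := by nlinarith
      _ = k ^ 2 := sq_abs k
  have hkcoef : k ^ 2 * D + B ≤ -1 := by
    have : B + 1 ≤ k ^ 2 * (-D) := (div_le_iff₀ hnD).mp hksq
    nlinarith
  have hkpos : 0 < k ^ 2 := by nlinarith [sq_abs k, abs_nonneg k]
  have hMeq : k ^ 2 • H + Matrix.vecMulVec ![z1, z2] ![z1, z2] =
      !![k ^ 2 * (1 / cbar1 + g11) + z1 * z1, k ^ 2 * g12 + z1 * z2;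
         k ^ 2 * g12 + z1 * z2, k ^ 2 * (1 / cbar2 + g22) + z2 * z2] := by
    rw [hH]
    ext i j
    fin_cases i <;> fin_cases j <;>
      simp [Matrix.vecMulVec_apply, Matrix.smul_apply] <;> ring
  rw [hMeq]
  have hdetval : (k ^ 2 * (1 / cbar1 + g11) + z1 * z1) *
      (k ^ 2 * (1 / cbar2 + g22) + z2 * z2) -
      (k ^ 2 * g12 + z1 * z2) * (k ^ 2 * g12 + z1 * z2) = k ^ 2 * (k ^ 2 * D + B) := by
    rw [hD, hB]; ring
  constructor
  · rw [Matrix.det_fin_two_of, hdetval]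
    nlinarith
  · apply neg_form_of_det_neg
    rw [hdetval]
    nlinarith
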